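/- Let X1 = λ1·R1 + λ2·R2 + λ3·R3 + λ4·R4 and X2 = λ1·R1 + λ2·R2 + λ3·R3' + λ4·R4', where R1, R2, R3, R3', R4, R4' are independent standard exponentials and λ1, λ2, λ3, λ4 are distinct positive reals summing to 1. If max{λ1, λ2, λ3, λ4} ∈ {λ3, λ4}, then lim_{y→∞} P(X1 > y, X2 > y) / P(X1 > y) = 0. -/

import Mathlib

open MeasureTheory ProbabilityTheory Filter

/-- `R` is a standard exponential random variable under `μ`:
its survival function is `exp (-y)` for `y ≥ 0` and `1` for `y < 0`. -/
def IsStdExp {Ω : Type*} [MeasurableSpace Ω] (μ : Measure Ω) (R : Ω → ℝ) : Prop :=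
  Measurable R ∧ ∀ y : ℝ, μ {ω | y < R ω} = ENNReal.ofReal (Real.exp (-(max y 0)))

section AuxLemmas

open Real Set

lemma IsStdExpAux.ae_nonneg {Ω : Type*} [MeasurableSpace Ω] {μ : Measure Ω}
    [IsProbabilityMeasure μ] {R : Ω → ℝ} (hmeas : Measurable R)
    (hsurv : ∀ y : ℝ, μ {ω | y < R ω} = ENNReal.ofReal (Real.exp (-(max y 0)))) :
    ∀ᵐ ω ∂μ, 0 ≤ R ω := by
  rw [ae_iff]
  have hnull : ∀ n : ℕ, μ {ω | R ω ≤ -(1 / (n + 1 : ℝ))} = 0 := by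
    intro n
    have hpos : (0:ℝ) < 1 / (n + 1 : ℝ) := by positivity
    have h1 : μ {ω | -(1 / (n + 1 : ℝ)) < R ω} = 1 := by
      rw [hsurv, max_eq_right (by linarith), neg_zero, Real.exp_zero, ENNReal.ofReal_one]
    have hc : {ω | R ω ≤ -(1 / (n + 1 : ℝ))} = {ω | -(1 / (n + 1 : ℝ)) < R ω}ᶜ := by
      ext ω; simp [not_lt]
    rw [hc, measure_compl (measurableSet_lt measurable_const hmeas) (measure_ne_top _ _), h1,
      measure_univ]
    simp
  refine measure_mono_null (fun ω hω => ?_) (measure_iUnion_null hnull)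
  simp only [Set.mem_setOf_eq, not_le] at hω
  obtain ⟨n, hn⟩ := exists_nat_one_div_lt (show (0:ℝ) < -R ω by linarith)
  exact Set.mem_iUnion.mpr ⟨n, by simp only [Set.mem_setOf_eq]; linarith⟩

lemma IsStdExpAux.integrable_exp_mul {Ω : Type*} [MeasurableSpace Ω] {μ : Measure Ω}
    [IsProbabilityMeasure μ] {R : Ω → ℝ} (hmeas : Measurable R)
    (hsurv : ∀ y : ℝ, μ {ω | y < R ω} = ENNReal.ofReal (Real.exp (-(max y 0))))
    {a : ℝ} (ha0 : 0 < a) (ha1 : a < 1) :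
    Integrable (fun ω => Real.exp (a * R ω)) μ := by
  have hfm : Measurable fun ω => Real.exp (a * R ω) := (hmeas.const_mul a).exp
  refine ⟨hfm.aestronglyMeasurable, ?_⟩
  rw [hasFiniteIntegral_iff_ofReal (Eventually.of_forall fun ω => (Real.exp_pos _).le)]
  rw [lintegral_eq_lintegral_meas_lt μ (Eventually.of_forall fun ω => (Real.exp_pos _).le)
    hfm.aemeasurable]
  rw [← Ioc_union_Ioi_eq_Ioi (zero_le_one' ℝ),
    lintegral_union measurableSet_Ioi Ioc_disjoint_Ioi_same]
  have h1 : ∫⁻ t in Ioc (0:ℝ) 1, μ {ω | t < Real.exp (a * R ω)} ≤ 1 := by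
    calc ∫⁻ t in Ioc (0:ℝ) 1, μ {ω | t < Real.exp (a * R ω)}
        ≤ ∫⁻ _ in Ioc (0:ℝ) 1, 1 := lintegral_mono fun t => prob_le_one
      _ = 1 := by simp
  have h2 : ∫⁻ t in Ioi (1:ℝ), μ {ω | t < Real.exp (a * R ω)}
      = ∫⁻ t in Ioi (1:ℝ), ENNReal.ofReal (t ^ (-1/a)) := by
    refine setLIntegral_congr_fun measurableSet_Ioi (fun t ht => ?_)
    have ht1 : (1:ℝ) < t := ht
    have ht0 : (0:ℝ) < t := by linarith
    have hset : {ω | t < Real.exp (a * R ω)} = {ω | Real.log t / a < R ω} := by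
      ext ω
      simp only [Set.mem_setOf_eq]
      rw [div_lt_iff₀ ha0, mul_comm, ← Real.log_lt_iff_lt_exp ht0]
    rw [hset, hsurv, max_eq_left (div_nonneg (Real.log_nonneg ht1.le) ha0.le)]
    congr 1
    rw [Real.rpow_def_of_pos ht0]
    congr 1
    field_simp
  have h3 : ∫⁻ t in Ioi (1:ℝ), ENNReal.ofReal (t ^ (-1/a)) < ⊤ := by
    have hint : IntegrableOn (fun t : ℝ => t ^ (-1/a)) (Ioi 1) := by
      refine integrableOn_Ioi_rpow_of_lt ?_ one_pos
      rw [neg_div, neg_lt_neg_iff, lt_div_iff₀ ha0]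
      linarith
    exact hint.lintegral_lt_top
  rw [h2]
  exact ENNReal.add_lt_top.mpr ⟨lt_of_le_of_lt h1 ENNReal.one_lt_top, h3⟩

end AuxLemmas

set_option maxHeartbeats 1000000 in
/-- X1 and X2 share R1 (index 0) and R2 (index 1); indices 2,3 are R3,R4 for X1
and indices 4,5 are R3'\'',R4'\'' for X2. If the dominant mixture weight is λ3 or λ4,
the pair is asymptotically tail independent. -/
theorem stmt_6 {Ω : Type*} [MeasurableSpace Ω] (μ : Measure Ω) [IsProbabilityMeasure μ]
    (R : Fin 6 → Ω → ℝ) (hR : ∀ i, IsStdExp μ (R i))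
    (hind : iIndepFun R μ)
    (l1 l2 l3 l4 : ℝ) (hpos : 0 < l1 ∧ 0 < l2 ∧ 0 < l3 ∧ 0 < l4)
    (hdist : l1 ≠ l2 ∧ l1 ≠ l3 ∧ l1 ≠ l4 ∧ l2 ≠ l3 ∧ l2 ≠ l4 ∧ l3 ≠ l4)
    (hsum : l1 + l2 + l3 + l4 = 1)
    (X1 X2 : Ω → ℝ)
    (hX1 : ∀ ω, X1 ω = l1 * R 0 ω + l2 * R 1 ω + l3 * R 2 ω + l4 * R 3 ω)
    (hX2 : ∀ ω, X2 ω = l1 * R 0 ω + l2 * R 1 ω + l3 * R 4 ω + l4 * R 5 ω)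
    (hdom : max (max l1 l2) (max l3 l4) = l3 ∨ max (max l1 l2) (max l3 l4) = l4) :
    Tendsto (fun y : ℝ =>
        (μ {ω | y < X1 ω ∧ y < X2 ω}).toReal / (μ {ω | y < X1 ω}).toReal)
      atTop (nhds 0) := by
  obtain ⟨hl1, hl2, hl3, hl4⟩ := hpos
  obtain ⟨h12, h13, h14, h23, h24, h34⟩ := hdist
  set M : ℝ := max (max l1 l2) (max l3 l4) with hMdef
  set m : ℝ := max l1 l2 with hmdef
  have hl3M : l3 ≤ M := le_trans (le_max_left _ _) (le_max_right _ _)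
  have hl4M : l4 ≤ M := le_trans (le_max_right _ _) (le_max_right _ _)
  have hl1m : l1 ≤ m := le_max_left _ _
  have hl2m : l2 ≤ m := le_max_right _ _
  have hmM' : m ≤ M := le_max_left _ _
  have hl1M : l1 < M :=
    lt_of_le_of_ne (le_trans hl1m hmM') (by rcases hdom with h | h <;> rw [h] <;> assumption)
  have hl2M : l2 < M :=
    lt_of_le_of_ne (le_trans hl2m hmM') (by rcases hdom with h | h <;> rw [h] <;> assumption)
  have hmM : m < M := max_lt hl1M hl2M
  have hm0 : 0 < m := lt_of_lt_of_le hl1 hl1m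
  have hM0 : 0 < M := lt_trans hm0 hmM
  clear hMdef hmdef
  clear_value M m
  -- choice of the Chernoff parameter s
  set s : ℝ := (1/(2*M) + min (1/(2*m)) (1/M)) / 2 with hsdef
  have hlow : 1/(2*M) < min (1/(2*m)) (1/M) := by
    refine lt_min ?_ ?_
    · exact one_div_lt_one_div_of_lt (by positivity) (by linarith)
    · exact one_div_lt_one_div_of_lt hM0 (by linarith)
  have hs_lb : 1/(2*M) < s := by rw [hsdef]; linarith
  have hs_ub : s < min (1/(2*m)) (1/M) := by rw [hsdef]; linarith
  have hs0 : 0 < s := lt_trans (by positivity) hs_lb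
  have hs2m : s < 1/(2*m) := lt_of_lt_of_le hs_ub (min_le_left _ _)
  have hsM : s < 1/M := lt_of_lt_of_le hs_ub (min_le_right _ _)
  have hs2m' : s * (2*m) < 1 := by
    rw [lt_div_iff₀ (by linarith : (0:ℝ) < 2*m)] at hs2m; exact hs2m
  have hsM' : s * M < 1 := by rw [lt_div_iff₀ hM0] at hsM; exact hsM
  clear hsdef hs_ub hlow
  clear_value s
  -- coefficients
  set c : Fin 6 → ℝ := ![2*l1, 2*l2, l3, l4, l3, l4] with hcdef
  have hkeym : ∀ lam : ℝ, 0 < lam → lam ≤ m → s * (2*lam) < 1 := by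
    intro lam h1 h2; nlinarith [hs0.le]
  have hkeyM : ∀ lam : ℝ, 0 < lam → lam ≤ M → s * lam < 1 := by
    intro lam h1 h2; nlinarith [hs0.le]
  have hc0 : c 0 = 2*l1 := rfl
  have hc1 : c 1 = 2*l2 := rfl
  have hc2 : c 2 = l3 := rfl
  have hc3 : c 3 = l4 := rfl
  have hc4 : c 4 = l3 := rfl
  have hc5 : c 5 = l4 := rfl
  clear_value c
  have hc_pos : ∀ i, 0 < c i := by
    intro i
    fin_cases i
    · show (0:ℝ) < c 0; rw [hc0]; linarith
    · show (0:ℝ) < c 1; rw [hc1]; linarith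
    · show (0:ℝ) < c 2; rw [hc2]; linarith
    · show (0:ℝ) < c 3; rw [hc3]; linarith
    · show (0:ℝ) < c 4; rw [hc4]; linarith
    · show (0:ℝ) < c 5; rw [hc5]; linarith
  have hc_lt : ∀ i, s * c i < 1 := by
    intro i
    fin_cases i
    · show s * c 0 < 1; rw [hc0]; exact hkeym l1 hl1 hl1m
    · show s * c 1 < 1; rw [hc1]; exact hkeym l2 hl2 hl2m
    · show s * c 2 < 1; rw [hc2]; exact hkeyM l3 hl3 hl3M
    · show s * c 3 < 1; rw [hc3]; exact hkeyM l4 hl4 hl4M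
    · show s * c 4 < 1; rw [hc4]; exact hkeyM l3 hl3 hl3M
    · show s * c 5 < 1; rw [hc5]; exact hkeyM l4 hl4 hl4M
  -- the scaled variables
  set Y : Fin 6 → Ω → ℝ := fun i ω => c i * R i ω with hYdef
  have hYmeas : ∀ i, Measurable (Y i) := fun i => ((hR i).1.const_mul _)
  have hYind : iIndepFun Y μ :=
    hind.comp (fun i => fun x : ℝ => c i * x) (fun i => measurable_id.const_mul _)
  have hYint : ∀ i ∈ Finset.univ, Integrable (fun ω => Real.exp (s * Y i ω)) μ := by
    intro i _
    have heq : (fun ω => Real.exp (s * Y i ω)) = fun ω => Real.exp ((s * c i) * R i ω) := by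
      funext ω; rw [hYdef]; ring_nf
    rw [heq]
    exact IsStdExpAux.integrable_exp_mul (hR i).1 (hR i).2
      (mul_pos hs0 (hc_pos i)) (hc_lt i)
  set W : Ω → ℝ := ∑ i, Y i with hWdef
  have hWint : Integrable (fun ω => Real.exp (s * W ω)) μ :=
    hYind.integrable_exp_mul_sum hYmeas hYint
  have hW : ∀ ω, X1 ω + X2 ω = W ω := by
    intro ω
    rw [hWdef]
    simp only [Finset.sum_apply, Fin.sum_univ_six, hYdef]
    rw [hX1, hX2, hc0, hc1, hc2, hc3, hc4, hc5]
    ring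
  clear_value Y W
  set K : ℝ := mgf W μ s with hKdef
  have hK0 : 0 ≤ K := mgf_nonneg
  -- upper bound on the numerator via Chernoff's bound
  have hnum : ∀ y : ℝ, (μ {ω | y < X1 ω ∧ y < X2 ω}).toReal ≤ Real.exp (-s * (2*y)) * K := by
    intro y
    refine le_trans ?_ (measure_ge_le_exp_mul_mgf (2*y) hs0.le hWint)
    refine ENNReal.toReal_mono (measure_ne_top _ _) (measure_mono ?_)
    intro ω hω
    obtain ⟨h1, h2⟩ := hω
    have := hW ω
    simp only [Set.mem_setOf_eq]
    linarith
  -- lower bound on the denominator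
  have hae : ∀ i : Fin 6, ∀ᵐ ω ∂μ, 0 ≤ R i ω := fun i =>
    IsStdExpAux.ae_nonneg (hR i).1 (hR i).2
  obtain ⟨j, hj⟩ : ∃ j : Fin 6, ∀ᵐ ω ∂μ, M * R j ω ≤ X1 ω := by
    rcases hdom with h | h
    · refine ⟨2, ?_⟩
      filter_upwards [hae 0, hae 1, hae 3] with ω a0 a1 a3
      rw [hX1 ω, h]
      linarith [mul_nonneg hl1.le a0, mul_nonneg hl2.le a1, mul_nonneg hl4.le a3]
    · refine ⟨3, ?_⟩
      filter_upwards [hae 0, hae 1, hae 2] with ω a0 a1 a2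
      rw [hX1 ω, h]
      linarith [mul_nonneg hl1.le a0, mul_nonneg hl2.le a1, mul_nonneg hl3.le a2]
  have hden : ∀ y : ℝ, 0 ≤ y → Real.exp (-(y/M)) ≤ (μ {ω | y < X1 ω}).toReal := by
    intro y hy
    have h1 : μ {ω | y/M < R j ω} ≤ μ {ω | y < X1 ω} := by
      refine measure_mono_ae ?_
      filter_upwards [hj] with ω hω hmem
      have h2 : y < R j ω * M := (div_lt_iff₀ hM0).mp hmem
      have h3 : y < M * R j ω := by linarith
      exact lt_of_lt_of_le h3 hω
    calc Real.exp (-(y/M)) = (μ {ω | y/M < R j ω}).toReal := by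
          rw [(hR j).2, max_eq_left (div_nonneg hy hM0.le),
            ENNReal.toReal_ofReal (Real.exp_pos _).le]
      _ ≤ (μ {ω | y < X1 ω}).toReal := ENNReal.toReal_mono (measure_ne_top _ _) h1
  -- the squeezing function
  have hratio : ∀ᶠ y in atTop,
      (μ {ω | y < X1 ω ∧ y < X2 ω}).toReal / (μ {ω | y < X1 ω}).toReal
        ≤ K * Real.exp ((1/M - 2*s) * y) := by
    filter_upwards [eventually_ge_atTop (0:ℝ)] with y hy
    calc (μ {ω | y < X1 ω ∧ y < X2 ω}).toReal / (μ {ω | y < X1 ω}).toReal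
        ≤ (Real.exp (-s * (2*y)) * K) / Real.exp (-(y/M)) :=
          div_le_div₀ (by positivity) (hnum y) (Real.exp_pos _) (hden y hy)
      _ = K * Real.exp ((1/M - 2*s) * y) := by
          rw [div_eq_iff (Real.exp_ne_zero _), mul_assoc, ← Real.exp_add,
            mul_comm (Real.exp (-s * (2*y))) K]
          congr 1
          exact congrArg Real.exp (by ring)
  have hcneg : 1/M - 2*s < 0 := by
    have h1 : 1 < s * (2*M) := (div_lt_iff₀ (by positivity : (0:ℝ) < 2*M)).mp hs_lb
    rw [sub_neg, div_lt_iff₀ hM0]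
    nlinarith
  have hg : Tendsto (fun y : ℝ => K * Real.exp ((1/M - 2*s) * y)) atTop (nhds 0) := by
    have h1 : Tendsto (fun y : ℝ => (1/M - 2*s) * y) atTop atBot :=
      (tendsto_const_mul_atBot_of_neg hcneg).mpr tendsto_id
    have h2 := (Real.tendsto_exp_atBot.comp h1).const_mul K
    simpa using h2
  exact squeeze_zero'
    (Eventually.of_forall fun y => div_nonneg ENNReal.toReal_nonneg ENNReal.toReal_nonneg)
    hratio hg
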